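/- Let A be a complete local characteristic-2 domain with maximal ideal m, fraction field K, and finite residue field 𝔽. Let g ∈ GL_2(A) have distinct eigenvalues α, β ∈ A, and let w = val(α − β) where val is the valuation on K normalized so a uniformizer has valuation 1 (assume A is a DVR). Let Ad = M_2(A) with g acting by conjugation. Suppose z ∈ A is nonzero, Y ∈ ϖ^{val(z)+w+1}·Ad, and m ≥ 0 is such that z·I + Y ∈ (g−1)·Ad + ϖ^m·Ad, where (g−1)X = gXg^{-1} − X. Then m ≤ val(z) + w. -/

import Mathlib

/-- Let `A` be the ring of integers of a local field of characteristic 2 (a complete DVR with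
finite residue field), with uniformizer `ϖ`. Let `g ∈ GL₂(A)` have distinct eigenvalues
`α, β ∈ A`, let `w = val(α − β)`, and let `Ad = M₂(A)` with `g` acting by conjugation.
If `z ∈ A` is nonzero with `val(z) = vz`, `Y ∈ ϖ^(vz+w+1)·Ad`, and `m ≥ 0` is such that
`z·I + Y ∈ (g−1)·Ad + ϖ^m·Ad` (where `(g−1)X = gXg⁻¹ − X`), then `m ≤ vz + w`. -/
theorem statement9 {A : Type*} [CommRing A] [IsDomain A] [IsDiscreteValuationRing A]
    [CharP A 2] [IsAdicComplete (IsLocalRing.maximalIdeal A) A]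
    [Finite (IsLocalRing.ResidueField A)]
    (ϖ : A) (hϖ : Irreducible ϖ)
    (G : (Matrix (Fin 2) (Fin 2) A)ˣ)
    (α β : A) (hαβ : α ≠ β)
    (hchar : Matrix.charpoly (G : Matrix (Fin 2) (Fin 2) A)
        = (Polynomial.X - Polynomial.C α) * (Polynomial.X - Polynomial.C β))
    (w : ℕ) (hw1 : α - β ∈ Ideal.span {ϖ ^ w}) (hw2 : α - β ∉ Ideal.span {ϖ ^ (w + 1)})
    (z : A) (hz : z ≠ 0)
    (vz : ℕ) (hvz1 : z ∈ Ideal.span {ϖ ^ vz}) (hvz2 : z ∉ Ideal.span {ϖ ^ (vz + 1)})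
    (Y : Matrix (Fin 2) (Fin 2) A) (hY : ∃ Y' : Matrix (Fin 2) (Fin 2) A, Y = ϖ ^ (vz + w + 1) • Y')
    (m : ℕ)
    (hmem : ∃ X Z : Matrix (Fin 2) (Fin 2) A,
      z • (1 : Matrix (Fin 2) (Fin 2) A) + Y
        = ((G : Matrix (Fin 2) (Fin 2) A) * X * ((G⁻¹ : (Matrix (Fin 2) (Fin 2) A)ˣ) : Matrix (Fin 2) (Fin 2) A) - X) + ϖ ^ m • Z) :
    m ≤ vz + w := by
  by_contra hm
  push_neg at hm
  obtain ⟨X, Z, hXZ⟩ := hmem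
  obtain ⟨Y', rfl⟩ := hY
  set g : Matrix (Fin 2) (Fin 2) A := (G : Matrix (Fin 2) (Fin 2) A) with hg
  -- trace of g is α + β
  have htr : Matrix.trace g = α + β := by
    have h1 : ((Polynomial.X - Polynomial.C α) * (Polynomial.X - Polynomial.C β) : Polynomial A)
        = Polynomial.X ^ 2 - Polynomial.C (α + β) * Polynomial.X + Polynomial.C (α * β) := by
      rw [Polynomial.C_add, Polynomial.C_mul]; ring
    rw [h1] at hchar
    rw [Matrix.trace_eq_neg_charpoly_coeff, hchar]
    simp
  -- multiply the equation by g on the right and take traces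
  have key := congrArg (fun M => Matrix.trace (M * g)) hXZ
  simp only [Matrix.add_mul, Matrix.sub_mul, Matrix.smul_mul, Matrix.one_mul,
    Matrix.trace_add, Matrix.trace_sub, Matrix.trace_smul, smul_eq_mul] at key
  have hinv : ((G⁻¹ : (Matrix (Fin 2) (Fin 2) A)ˣ) : Matrix (Fin 2) (Fin 2) A) * g = 1 := by
    rw [hg, ← Units.val_mul, inv_mul_cancel, Units.val_one]
  have hcomm : Matrix.trace (g * X * ((G⁻¹ : (Matrix (Fin 2) (Fin 2) A)ˣ) : Matrix (Fin 2) (Fin 2) A) * g)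
      = Matrix.trace (X * g) := by
    rw [mul_assoc, hinv, mul_one, Matrix.trace_mul_comm]
  rw [hcomm, htr] at key
  -- key : z * (α + β) + ϖ^(vz+w+1) * trace (Y' * g) = trace (X*g) - trace (X*g) + ϖ^m * trace (Z*g)
  have hchar2 : (2 : A) = 0 := by
    have := CharP.cast_eq_zero A 2
    push_cast at this
    exact this
  have hsum : α + β = α - β := by linear_combination β * hchar2
  -- conclude z * (α - β) ∈ (ϖ^(vz+w+1))
  obtain ⟨k, hk⟩ := Nat.exists_eq_add_of_le hm
  have hdvd : ϖ ^ (vz + w + 1) ∣ z * (α - β) := by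
    refine ⟨ϖ ^ k * Matrix.trace (Z * g) - Matrix.trace (Y' * g), ?_⟩
    have hpm : (ϖ : A) ^ m = ϖ ^ (vz + w + 1) * ϖ ^ k := by rw [← pow_add, hk]
    rw [← hsum]
    linear_combination key + Matrix.trace (Z * g) * hpm
  -- exact valuations give a contradiction
  obtain ⟨c, hc⟩ := Ideal.mem_span_singleton.mp hvz1
  obtain ⟨d, hd⟩ := Ideal.mem_span_singleton.mp hw1
  have hprime : Prime ϖ := hϖ.prime
  have hϖ0 : ϖ ≠ 0 := hprime.ne_zero
  have hcd : ϖ ∣ c * d := by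
    obtain ⟨t, ht⟩ := hdvd
    have : ϖ ^ (vz + w) * (c * d) = ϖ ^ (vz + w) * (ϖ * t) := by
      have := ht
      rw [hc, hd] at this
      ring_nf at this ⊢
      linear_combination this
    exact ⟨t, mul_left_cancel₀ (pow_ne_zero _ hϖ0) this⟩
  rcases hprime.dvd_mul.mp hcd with h | h
  · apply hvz2
    rw [Ideal.mem_span_singleton, hc]
    obtain ⟨e, he⟩ := h
    exact ⟨e, by rw [he]; ring⟩
  · apply hw2
    rw [Ideal.mem_span_singleton, hd]
    obtain ⟨e, he⟩ := h
    exact ⟨e, by rw [he]; ring⟩
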